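/- For any binary tree T, f(T) = ∑_{k≥1} (−1)^{k−1} f_k(T), where f_k(T) is the number of green chains of length k in T starting at the root, and f(T) equals 1 − F(T_R) if T is nonempty with T_L empty, 1 − F(T_L) if T is nonempty with T_R empty, and 0 otherwise (F being the number of maximal green nodes). -/

import Mathlib

open MeasureTheory

inductive BTree : Type
  | nil : BTree
  | node : BTree → BTree → BTree
deriving DecidableEq

namespace BTree

instance : MeasurableSpace BTree := ⊤

def size : BTree → ℕ
  | nil => 0
  | node l r => size l + size r + 1

def left : BTree → BTree
  | nil => nil
  | node l _ => l

def right : BTree → BTree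
  | nil => nil
  | node _ r => r

/-- The number of maximal green nodes (green = outdegree ≤ 1, maximal = no green
strict ancestor): a green root gives the unique maximal green node. -/
def F : BTree → ℕ
  | nil => 0
  | node l r => if l = nil ∨ r = nil then 1 else F l + F r

/-- The toll function `f(T) = F(T) - F(T_L) - F(T_R)`. -/
def f : BTree → ℤ
  | nil => 0
  | node nil r => 1 - F r
  | node l nil => 1 - F l
  | node _ _ => 0

/-- The list of all subtrees `T_v` rooted at nodes `v` of `T`. -/
def subtrees : BTree → List BTree
  | nil => []
  | node l r => node l r :: (subtrees l ++ subtrees r)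

/-- The root is green: the tree is nonempty and has at most one root child. -/
def greenRoot : BTree → Prop
  | nil => False
  | node l r => l = nil ∨ r = nil

instance : DecidablePred greenRoot := fun t => by
  cases t <;> simp [greenRoot] <;> infer_instance

/-- The random binary search tree with `n` nodes. -/
noncomputable def bst : ℕ → PMF BTree
  | 0 => PMF.pure nil
  | n + 1 =>
    (PMF.uniformOfFintype (Fin (n + 1))).bind fun i =>
      (bst i.val).bind fun l => (bst (n - i.val)).bind fun r => PMF.pure (node l r)
  decreasing_by
    · exact i.isLt
    · omega

/-- `fchain k T` is the number of green chains of length `k` in `T` starting at the root. -/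
def fchain : ℕ → BTree → ℕ
  | 0, _ => 0
  | 1, nil => 0
  | 1, node l r => if l = nil ∨ r = nil then 1 else 0
  | _ + 2, nil => 0
  | k + 2, node l r =>
    if l = nil ∨ r = nil then
      ((subtrees l).map (fun t => fchain (k + 1) t)).sum
        + ((subtrees r).map (fun t => fchain (k + 1) t)).sum
    else 0
  termination_by k _ => k

/-- `Fchain k T` is the total number of green chains of length `k` in `T`. -/
def Fchain (k : ℕ) (T : BTree) : ℕ := ((subtrees T).map (fchain k)).sum

end BTree

namespace BTree

lemma fchain_nil (k : ℕ) : fchain k nil = 0 := by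
  match k with
  | 0 => simp [fchain]
  | 1 => simp [fchain]
  | k+2 => simp [fchain]

lemma fchain_one_def (l r : BTree) :
    fchain 1 (node l r) = if l = nil ∨ r = nil then 1 else 0 := by simp [fchain]

lemma fchain_succ_succ_def (k : ℕ) (l r : BTree) :
    fchain (k+2) (node l r) =
      if l = nil ∨ r = nil then
        ((subtrees l).map (fchain (k+1))).sum + ((subtrees r).map (fchain (k+1))).sum
      else 0 := by simp [fchain]

lemma fchain_not_green (k : ℕ) (l r : BTree) (hg : ¬ (l = nil ∨ r = nil)) :
    fchain k (node l r) = 0 := by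
  match k with
  | 0 => simp [fchain]
  | 1 => simp [fchain_one_def, hg]
  | k+2 => simp [fchain_succ_succ_def, hg]

lemma size_le_of_mem_subtrees : ∀ T t : BTree, t ∈ subtrees T → size t ≤ size T := by
  intro T
  induction T with
  | nil => intro t h; simp [subtrees] at h
  | node l r ihl ihr =>
    intro t h
    simp only [subtrees, List.mem_cons, List.mem_append] at h
    rcases h with h | h | h
    · subst h; exact le_rfl
    · have := ihl t h; simp only [size]; omega
    · have := ihr t h; simp only [size]; omega

lemma f_node_eq (l r : BTree) : f (node l r) = (F (node l r) : ℤ) - F l - F r := by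
  cases l with
  | nil => simp [f, F]
  | node a b =>
    cases r with
    | nil => simp [f, F]
    | node c d => simp [f, F]

lemma sum_f_subtrees : ∀ T : BTree, ((subtrees T).map f).sum = (F T : ℤ) := by
  intro T
  induction T with
  | nil => simp [subtrees, F]
  | node l r ihl ihr =>
    simp only [subtrees, List.map_cons, List.map_append, List.sum_cons, List.sum_append,
      ihl, ihr, f_node_eq]
    ring

lemma sum_list_swap (s : Finset ℕ) (l : List BTree) (g : ℕ → BTree → ℤ) :
    ∑ k ∈ s, (l.map (g k)).sum = (l.map (fun t => ∑ k ∈ s, g k t)).sum := by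
  induction l with
  | nil => simp
  | cons a l ih => simp [Finset.sum_add_distrib, ih]

lemma map_mul_sum (c : ℤ) (g : BTree → ℕ) (l : List BTree) :
    (l.map (fun t => c * (g t : ℤ))).sum = c * ((l.map g).sum : ℕ) := by
  induction l with
  | nil => simp
  | cons a l ih => simp [ih]; ring

lemma mainAux : ∀ n : ℕ, ∀ T : BTree, size T ≤ n → ∀ m : ℕ, size T ≤ m →
    f T = ∑ i ∈ Finset.range m, (-1:ℤ)^i * fchain (i+1) T := by
  intro n
  induction n with
  | zero =>
    intro T hT m hm
    cases T with
    | nil => simp [f, fchain_nil]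
    | node l r => simp [size] at hT
  | succ n ih =>
    have B : ∀ T' : BTree, size T' ≤ n → ∀ M : ℕ, size T' ≤ M →
        (F T' : ℤ) = ∑ i ∈ Finset.range M, (-1:ℤ)^i * Fchain (i+1) T' := by
      intro T' hT' M hM
      rw [← sum_f_subtrees T']
      have h2 : (subtrees T').map f
          = (subtrees T').map (fun t => ∑ i ∈ Finset.range M, (-1:ℤ)^i * fchain (i+1) t) := by
        apply List.map_congr_left
        intro t ht
        have hsz := size_le_of_mem_subtrees T' t ht
        exact ih t (le_trans hsz hT') M (le_trans hsz hM)
      rw [h2, ← sum_list_swap]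
      refine Finset.sum_congr rfl fun i _ => ?_
      rw [map_mul_sum]
      rfl
    intro T hT m hm
    cases T with
    | nil => simp [f, fchain_nil]
    | node l r =>
      by_cases hg : l = nil ∨ r = nil
      · have hs : size l + size r + 1 ≤ m := by simpa [size] using hm
        have hsn : size l + size r + 1 ≤ n + 1 := by simpa [size] using hT
        obtain ⟨m', rfl⟩ : ∃ m', m = m' + 1 := ⟨m - 1, by omega⟩
        rw [Finset.sum_range_succ']
        have hBl : (F l : ℤ) = ∑ i ∈ Finset.range m', (-1:ℤ)^i * Fchain (i+1) l :=
          B l (by omega) m' (by omega)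
        have hBr : (F r : ℤ) = ∑ i ∈ Finset.range m', (-1:ℤ)^i * Fchain (i+1) r :=
          B r (by omega) m' (by omega)
        have hF : F (node l r) = 1 := by simp [F, hg]
        have hterm : ∀ i, fchain (i+1+1) (node l r) = Fchain (i+1) l + Fchain (i+1) r := by
          intro i
          rw [show i+1+1 = i+2 from rfl, fchain_succ_succ_def, if_pos hg]
          rfl
        have h1 : fchain (0+1) (node l r) = 1 := by
          rw [fchain_one_def, if_pos hg]
        simp only [hterm, h1, pow_zero, pow_succ, one_mul, Nat.cast_one, Nat.cast_add]
        rw [f_node_eq, hF, hBl, hBr]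
        have key : ∑ x ∈ Finset.range m', (-1:ℤ)^x * -1 * ((Fchain (x+1) l : ℤ) + (Fchain (x+1) r : ℤ))
            = -(∑ i ∈ Finset.range m', (-1:ℤ)^i * Fchain (i+1) l)
              - (∑ i ∈ Finset.range m', (-1:ℤ)^i * Fchain (i+1) r) := by
          rw [← Finset.sum_neg_distrib, ← Finset.sum_sub_distrib]
          exact Finset.sum_congr rfl fun i _ => by ring
        rw [key]
        push_cast
        ring
      · have h0 : ∀ k, fchain k (node l r) = 0 := fun k => fchain_not_green k l r hg
        have hF : F (node l r) = F l + F r := by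
          rw [F]; rw [if_neg hg]
        rw [f_node_eq, hF]
        simp [h0]

end BTree

open BTree in
/-- `f(T) = ∑_{k≥1} (−1)^{k−1} f_k(T)`; the sum is finite since
`f_k(T) = 0` for `k > |T|`, so we sum up to any `m ≥ |T|`. -/
theorem f_eq_alternating_sum_fchain (T : BTree) (m : ℕ) (hm : size T ≤ m) :
    f T = ∑ k ∈ Finset.Icc 1 m, (-1 : ℤ) ^ (k - 1) * (fchain k T : ℤ) := by
  rw [show Finset.Icc 1 m = Finset.Ico 1 (m+1) from (Finset.Ico_add_one_right_eq_Icc 1 m).symm,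
    Finset.sum_Ico_eq_sum_range]
  simp only [Nat.add_sub_cancel]
  rw [BTree.mainAux (size T) T le_rfl m hm]
  refine Finset.sum_congr rfl fun i _ => ?_
  rw [add_comm 1 i]
  simp
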